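/- Let β > 1 and let φ : ℕ → [0,∞) be any nonnegative function. Then the Hausdorff dimension of E_φ = {x ∈ [0,1) : ℓ_n(x) ≥ φ(n) for infinitely many n} is at most 1/(1 + liminf_{n→∞} φ(n)/n), with the convention 1/∞ = 0. -/

import Mathlib

open Filter Real MeasureTheory Set

/-- The β-transformation T_β(x) = βx - ⌊βx⌋. -/
noncomputable def bT (β x : ℝ) : ℝ := β * x - ⌊β * x⌋

/-- The k-th digit (0-based: `bDigit β x k = ε_{k+1}(x)`) of the β-expansion. -/
noncomputable def bDigit (β x : ℝ) (k : ℕ) : ℤ := ⌊β * ((bT β)^[k] x)⌋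

/-- The n-th convergent ω_n(x) = Σ_{k=1}^n ε_k(x)/β^k. -/
noncomputable def bConv (β x : ℝ) (n : ℕ) : ℝ :=
  ∑ k ∈ Finset.range n, (bDigit β x k : ℝ) / β ^ (k + 1)

/-- ℓ_n(x): length of the longest run of zero digits just after the n-th digit. -/
noncomputable def ellRun (β x : ℝ) (n : ℕ) : ℕ :=
  sSup {k : ℕ | ∀ j < k, bDigit β x (n + j) = 0}

/-- r_n(x): maximal length of a run of zeros within the first n digits. -/
noncomputable def runMax (β x : ℝ) (n : ℕ) : ℕ :=
  sSup {k : ℕ | ∃ i, i + k ≤ n ∧ ∀ j < k, bDigit β x (i + j) = 0}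

open scoped ENNReal NNReal

lemma bT_mem (β x : ℝ) : bT β x ∈ Set.Ico (0:ℝ) 1 := by
  have h : bT β x = Int.fract (β * x) := rfl
  rw [h]
  exact ⟨Int.fract_nonneg _, Int.fract_lt_one _⟩

lemma bT_iter_mem (β : ℝ) {x : ℝ} (hx : x ∈ Set.Ico (0:ℝ) 1) (k : ℕ) :
    (bT β)^[k] x ∈ Set.Ico (0:ℝ) 1 := by
  cases k with
  | zero => exact hx
  | succ n => rw [Function.iterate_succ_apply']; exact bT_mem β _

lemma bDigit_nonneg {β : ℝ} (hβ : 1 < β) {x : ℝ} (hx : x ∈ Set.Ico (0:ℝ) 1) (k : ℕ) :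
    0 ≤ bDigit β x k := by
  have h := bT_iter_mem β hx k
  exact Int.floor_nonneg.2 (mul_nonneg (by linarith) h.1)

lemma bDigit_le {β : ℝ} (hβ : 1 < β) {x : ℝ} (hx : x ∈ Set.Ico (0:ℝ) 1) (k : ℕ) :
    bDigit β x k ≤ ⌊β⌋ := by
  have h := bT_iter_mem β hx k
  exact Int.floor_le_floor (by nlinarith [h.1, h.2])

lemma bConv_spec {β : ℝ} (hβ : 1 < β) (x : ℝ) (n : ℕ) :
    bConv β x n + (bT β)^[n] x / β ^ n = x := by
  induction n with
  | zero => simp [bConv]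
  | succ n ih =>
    have hb : (β:ℝ) ^ (n+1) ≠ 0 := by positivity
    have hb' : (β:ℝ) ^ n ≠ 0 := by positivity
    have hT : bT β ((bT β)^[n] x) = β * (bT β)^[n] x - (bDigit β x n : ℝ) := rfl
    have key : bConv β x (n+1) + (bT β)^[n+1] x / β ^ (n+1)
        = bConv β x n + (bT β)^[n] x / β ^ n := by
      rw [bConv, Finset.sum_range_succ, ← bConv, Function.iterate_succ_apply', hT]
      field_simp
      ring
    rw [key, ih]

lemma bConv_le_self {β : ℝ} (hβ : 1 < β) {x : ℝ} (hx : x ∈ Set.Ico (0:ℝ) 1) (n : ℕ) :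
    bConv β x n ≤ x := by
  have h := bConv_spec hβ x n
  have h2 := (bT_iter_mem β hx n).1
  have hp : (0:ℝ) < β ^ n := pow_pos (lt_trans one_pos hβ) n
  have : 0 ≤ (bT β)^[n] x / β ^ n := div_nonneg h2 hp.le
  linarith

lemma self_lt_bConv_add {β : ℝ} (hβ : 1 < β) {x : ℝ} (hx : x ∈ Set.Ico (0:ℝ) 1) (n : ℕ) :
    x < bConv β x n + (β ^ n)⁻¹ := by
  have h := bConv_spec hβ x n
  have h2 := (bT_iter_mem β hx n).2
  have hp : (0:ℝ) < β ^ n := pow_pos (lt_trans one_pos hβ) n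
  have : (bT β)^[n] x / β ^ n < (β ^ n)⁻¹ := by
    rw [div_lt_iff₀ hp, inv_mul_cancel₀ (ne_of_gt hp)]
    exact h2
  linarith

lemma bConv_succ (β x : ℝ) (n : ℕ) :
    bConv β x (n+1) = bConv β x n + (bDigit β x n : ℝ) / β ^ (n + 1) := by
  rw [bConv, Finset.sum_range_succ, ← bConv]

lemma bConv_mono_idx {β : ℝ} (hβ : 1 < β) {x : ℝ} (hx : x ∈ Set.Ico (0:ℝ) 1)
    {n m : ℕ} (h : n ≤ m) : bConv β x n ≤ bConv β x m := by
  apply Finset.sum_le_sum_of_subset_of_nonneg (Finset.range_subset_range.2 h)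
  intro k _ _
  have := bDigit_nonneg hβ hx k
  positivity

lemma bT_iter_eq {β : ℝ} (hβ : 1 < β) (x : ℝ) (n : ℕ) :
    (bT β)^[n] x = β ^ n * (x - bConv β x n) := by
  have h := bConv_spec hβ x n
  have hp : (0:ℝ) < β ^ n := pow_pos (lt_trans one_pos hβ) n
  field_simp at h ⊢
  linarith

lemma bDigit_eq_floor {β : ℝ} (hβ : 1 < β) (x : ℝ) (n : ℕ) :
    bDigit β x n = ⌊β ^ (n+1) * (x - bConv β x n)⌋ := by
  rw [bDigit, bT_iter_eq hβ, pow_succ]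
  ring_nf
lemma bConv_mono {β : ℝ} (hβ : 1 < β) {x y : ℝ} (hx : x ∈ Set.Ico (0:ℝ) 1)
    (hy : y ∈ Set.Ico (0:ℝ) 1) (hxy : x ≤ y) (n : ℕ) : bConv β x n ≤ bConv β y n := by
  by_cases h : ∀ j < n, bDigit β x j = bDigit β y j
  · apply le_of_eq
    unfold bConv
    exact Finset.sum_congr rfl fun k hk => by rw [h k (Finset.mem_range.1 hk)]
  · apply le_of_lt
    push_neg at h
    obtain ⟨j, hjn, hj⟩ := h
    have hex : ∃ j, bDigit β x j ≠ bDigit β y j := ⟨j, hj⟩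
    set j₀ := Nat.find hex with hj₀def
    have hj₀ : bDigit β x j₀ ≠ bDigit β y j₀ := Nat.find_spec hex
    have hj₀n : j₀ < n := lt_of_le_of_lt (Nat.find_le hj) hjn
    have hagree : ∀ i < j₀, bDigit β x i = bDigit β y i := by
      intro i hi
      by_contra hne
      exact absurd (Nat.find_le hne) (not_le.2 hi)
    have hconv : bConv β x j₀ = bConv β y j₀ := by
      unfold bConv
      exact Finset.sum_congr rfl fun k hk => by rw [hagree k (Finset.mem_range.1 hk)]
    have hp : (0:ℝ) < β ^ j₀ := pow_pos (lt_trans one_pos hβ) j₀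
    have hTle : (bT β)^[j₀] x ≤ (bT β)^[j₀] y := by
      rw [bT_iter_eq hβ, bT_iter_eq hβ, hconv]
      have := sub_le_sub_right hxy (bConv β y j₀)
      nlinarith
    have hdle : bDigit β x j₀ ≤ bDigit β y j₀ := by
      apply Int.floor_le_floor
      have hβ0 : (0:ℝ) < β := lt_trans one_pos hβ
      nlinarith
    have hdlt : bDigit β x j₀ + 1 ≤ bDigit β y j₀ := by omega
    have hp1 : (0:ℝ) < β ^ (j₀+1) := pow_pos (lt_trans one_pos hβ) (j₀+1)
    calc bConv β x n ≤ x := bConv_le_self hβ hx n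
      _ < bConv β x (j₀+1) + (β ^ (j₀+1))⁻¹ := self_lt_bConv_add hβ hx (j₀+1)
      _ = bConv β x j₀ + ((bDigit β x j₀ : ℝ) + 1) / β ^ (j₀+1) := by
          rw [bConv_succ]; rw [add_div]; rw [one_div]; ring
      _ ≤ bConv β y j₀ + (bDigit β y j₀ : ℝ) / β ^ (j₀+1) := by
          rw [hconv]
          have : ((bDigit β x j₀ : ℝ) + 1) ≤ (bDigit β y j₀ : ℝ) := by
            exact_mod_cast hdlt
          gcongr
      _ = bConv β y (j₀+1) := (bConv_succ β y j₀).symm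
      _ ≤ bConv β y n := bConv_mono_idx hβ hy hj₀n

lemma bConv_squeeze {β : ℝ} (hβ : 1 < β) {x t z : ℝ} (hx : x ∈ Set.Ico (0:ℝ) 1)
    (hz : z ∈ Set.Ico (0:ℝ) 1) (hxt : x ≤ t) (htz : t ≤ z) {n : ℕ}
    (h : bConv β x n = bConv β z n) : bConv β t n = bConv β x n := by
  have ht : t ∈ Set.Ico (0:ℝ) 1 := ⟨le_trans hx.1 hxt, lt_of_le_of_lt htz hz.2⟩
  have h1 := bConv_mono hβ hx ht hxt n
  have h2 := bConv_mono hβ ht hz htz n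
  rw [h] at h1 ⊢
  exact le_antisymm h2 h1

lemma bConv_mem {β : ℝ} (hβ : 1 < β) {x : ℝ} (hx : x ∈ Set.Ico (0:ℝ) 1) (n : ℕ) :
    bConv β x n ∈ Set.Ico (0:ℝ) 1 := by
  constructor
  · unfold bConv
    apply Finset.sum_nonneg
    intro k _
    have := bDigit_nonneg hβ hx k
    positivity
  · exact lt_of_le_of_lt (bConv_le_self hβ hx n) hx.2

/-- The greedy property: the value of a convergent is its own convergent. -/
lemma bConv_bConv {β : ℝ} (hβ : 1 < β) {x : ℝ} (hx : x ∈ Set.Ico (0:ℝ) 1) (n : ℕ) :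
    bConv β (bConv β x n) n = bConv β x n := by
  set v := bConv β x n with hv
  have hβ0 : (0:ℝ) < β := lt_trans one_pos hβ
  have key : ∀ k, k ≤ n → bConv β v k = bConv β x k := by
    intro k hk
    induction k with
    | zero => simp [bConv]
    | succ k ih =>
      have hk' : k ≤ n := Nat.le_of_succ_le hk
      have ihk := ih hk'
      have hdig : bDigit β v k = bDigit β x k := by
        rw [bDigit_eq_floor hβ v k, ihk]
        have hp : (0:ℝ) < β ^ (k+1) := pow_pos hβ0 (k+1)
        rw [Int.floor_eq_iff]
        constructor
        · have h1 : bConv β x (k+1) ≤ v := bConv_mono_idx hβ hx hk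
          rw [bConv_succ] at h1
          have : (bDigit β x k : ℝ) / β ^ (k+1) ≤ v - bConv β x k := by linarith
          rw [div_le_iff₀ hp] at this
          nlinarith
        · have h2 : v ≤ x := bConv_le_self hβ hx n
          have h3 := self_lt_bConv_add hβ hx (k+1)
          rw [bConv_succ] at h3
          have : v - bConv β x k < (bDigit β x k : ℝ) / β ^ (k+1) + (β ^ (k+1))⁻¹ := by
            linarith
          have h4 : β ^ (k+1) * (v - bConv β x k)
              < β ^ (k+1) * ((bDigit β x k : ℝ) / β ^ (k+1) + (β ^ (k+1))⁻¹) := by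
            exact (mul_lt_mul_iff_right₀ hp).2 this
          have h5 : β ^ (k+1) * ((bDigit β x k : ℝ) / β ^ (k+1) + (β ^ (k+1))⁻¹)
              = (bDigit β x k : ℝ) + 1 := by field_simp
          push_cast
          linarith
      rw [bConv_succ, bConv_succ, ihk, hdig]
  exact key n le_rfl

/-- The set of values of n-th convergents. -/
noncomputable def Vset (β : ℝ) (n : ℕ) : Set ℝ := (fun x => bConv β x n) '' Set.Ico 0 1

/-- The cylinder of a value. -/
def Cyl (β : ℝ) (n : ℕ) (v : ℝ) : Set ℝ := {x ∈ Set.Ico (0:ℝ) 1 | bConv β x n = v}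

lemma Vset_finite {β : ℝ} (hβ : 1 < β) (n : ℕ) : (Vset β n).Finite := by
  induction n with
  | zero =>
    apply Set.Finite.subset (Set.finite_singleton 0)
    rintro _ ⟨x, _, rfl⟩
    simp [bConv]
  | succ n ih =>
    refine Set.Finite.subset (Set.Finite.biUnion ih fun v _ =>
      Set.Finite.image (fun d : ℤ => v + (d:ℝ) / β ^ (n+1)) (Set.finite_Icc (0:ℤ) ⌊β⌋)) ?_
    rintro _ ⟨x, hx, rfl⟩
    simp only
    rw [bConv_succ]
    exact Set.mem_biUnion ⟨x, hx, rfl⟩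
      ⟨bDigit β x n, ⟨bDigit_nonneg hβ hx n, bDigit_le hβ hx n⟩, rfl⟩

lemma Cyl_subset {β : ℝ} {n : ℕ} {v : ℝ} : Cyl β n v ⊆ Set.Ico (0:ℝ) 1 := fun _ h => h.1

lemma Cyl_nonempty {β : ℝ} (hβ : 1 < β) {n : ℕ} {v : ℝ} (hv : v ∈ Vset β n) :
    (Cyl β n v).Nonempty := by
  obtain ⟨x, hx, rfl⟩ := hv
  exact ⟨x, hx, rfl⟩

lemma v_mem_Cyl {β : ℝ} (hβ : 1 < β) {n : ℕ} {v : ℝ} (hv : v ∈ Vset β n) :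
    v ∈ Cyl β n v := by
  obtain ⟨x, hx, rfl⟩ := hv
  exact ⟨bConv_mem hβ hx n, bConv_bConv hβ hx n⟩

lemma Cyl_le_sup {β : ℝ} {n : ℕ} {v : ℝ} {x : ℝ} (hx : x ∈ Cyl β n v) :
    x ≤ sSup (Cyl β n v) :=
  le_csSup ⟨1, fun y hy => (hy.1.2).le⟩ hx

lemma v_le_mem_Cyl {β : ℝ} (hβ : 1 < β) {n : ℕ} {v : ℝ} {x : ℝ} (hx : x ∈ Cyl β n v) :
    v ≤ x := by
  rw [← hx.2]; exact bConv_le_self hβ hx.1 n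

/-- The open interval from v to the sup of the cylinder is inside the cylinder. -/
lemma Ioo_subset_Cyl {β : ℝ} (hβ : 1 < β) {n : ℕ} {v : ℝ} (hv : v ∈ Vset β n) :
    Set.Ioo v (sSup (Cyl β n v)) ⊆ Cyl β n v := by
  intro t ht
  obtain ⟨z, hz, htz⟩ := exists_lt_of_lt_csSup (Cyl_nonempty hβ hv) ht.2
  have hvC := v_mem_Cyl hβ hv
  have hzI := hz.1
  have ht1 : t ∈ Set.Ico (0:ℝ) 1 := ⟨le_trans hvC.1.1 ht.1.le, lt_of_le_of_lt htz.le hzI.2⟩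
  refine ⟨ht1, ?_⟩
  have := bConv_squeeze hβ hvC.1 hzI ht.1.le htz.le (by rw [hvC.2, hz.2])
  rw [this, hvC.2]

lemma volume_Cyl_ge {β : ℝ} (hβ : 1 < β) {n : ℕ} {v : ℝ} (hv : v ∈ Vset β n) :
    ENNReal.ofReal (sSup (Cyl β n v) - v) ≤ volume (Cyl β n v) := by
  have h := measure_mono (μ := volume) (Ioo_subset_Cyl hβ hv)
  rwa [Real.volume_Ioo] at h

/-- Sum of cylinder widths is at most 1. -/
lemma sum_Cyl_width {β : ℝ} (hβ : 1 < β) (n : ℕ) (s : Finset ℝ) (hs : ↑s ⊆ Vset β n) :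
    ∑ v ∈ s, (sSup (Cyl β n v) - v) ≤ 1 := by
  have h0 : ∀ v ∈ s, 0 ≤ sSup (Cyl β n v) - v := by
    intro v hv
    have := Cyl_le_sup (v_mem_Cyl hβ (hs hv))
    linarith
  rw [← ENNReal.ofReal_le_one, ENNReal.ofReal_sum_of_nonneg h0]
  calc ∑ v ∈ s, ENNReal.ofReal (sSup (Cyl β n v) - v)
      = volume (⋃ v ∈ s, Set.Ioo v (sSup (Cyl β n v))) := by
        rw [measure_biUnion_finset ?_ (fun _ _ => measurableSet_Ioo)]
        · exact Finset.sum_congr rfl fun v _ => (Real.volume_Ioo).symm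
        · intro u hu w hw huw
          apply Set.disjoint_of_subset (Ioo_subset_Cyl hβ (hs hu)) (Ioo_subset_Cyl hβ (hs hw))
          intro S hSu hSw x hxS
          exact absurd (((hSu hxS).2.symm.trans (hSw hxS).2)) huw
    _ ≤ volume (Set.Ico (0:ℝ) 1) := by
        apply measure_mono
        intro x hx
        simp only [Set.mem_iUnion] at hx
        obtain ⟨v, hv, hxv⟩ := hx
        exact (Ioo_subset_Cyl hβ (hs hv) hxv).1
    _ = 1 := by rw [Real.volume_Ico]; norm_num

lemma card_step {β : ℝ} (hβ : 1 < β) (n : ℕ) :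
    ((Vset β (n+1)).ncard : ℝ) ≤ (Vset β n).ncard + β ^ (n+1) := by
  have hβ0 : (0:ℝ) < β := lt_trans one_pos hβ
  have hB : (0:ℝ) < β ^ (n+1) := pow_pos hβ0 (n+1)
  set Vf : Finset ℝ := (Vset_finite hβ n).toFinset with hVf
  set Tf : Finset ℝ := Vf.biUnion (fun v =>
    (Finset.range (⌊β ^ (n+1) * (sSup (Cyl β n v) - v)⌋.toNat + 1)).image
      (fun d : ℕ => v + (d:ℝ) / β ^ (n+1))) with hTf
  have hsub : Vset β (n+1) ⊆ ↑Tf := by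
    rintro _ ⟨x, hx, rfl⟩
    simp only
    have hvV : bConv β x n ∈ Vset β n := ⟨x, hx, rfl⟩
    have hxC : x ∈ Cyl β n (bConv β x n) := ⟨hx, rfl⟩
    have hd0 : 0 ≤ bDigit β x n := bDigit_nonneg hβ hx n
    have hdle : bDigit β x n ≤ ⌊β ^ (n+1) * (sSup (Cyl β n (bConv β x n)) - bConv β x n)⌋ := by
      rw [bDigit_eq_floor hβ]
      apply Int.floor_le_floor
      have := Cyl_le_sup hxC
      nlinarith
    rw [bConv_succ]
    apply Finset.mem_coe.2
    apply Finset.mem_biUnion.2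
    refine ⟨bConv β x n, (Set.Finite.mem_toFinset _).2 hvV, ?_⟩
    apply Finset.mem_image.2
    refine ⟨(bDigit β x n).toNat, ?_, ?_⟩
    · rw [Finset.mem_range]
      have := Int.toNat_le_toNat hdle
      omega
    · have hcast : ((bDigit β x n).toNat : ℝ) = ((bDigit β x n : ℤ) : ℝ) := by
        exact_mod_cast congrArg (fun z : ℤ => (z : ℝ)) (Int.toNat_of_nonneg hd0)
      rw [hcast]
  have hcard1 : (Vset β (n+1)).ncard ≤ Tf.card := by
    have := Set.ncard_le_ncard hsub (Tf.finite_toSet)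
    rwa [Set.ncard_coe_finset] at this
  have hcard2 : Tf.card ≤ ∑ v ∈ Vf, (⌊β ^ (n+1) * (sSup (Cyl β n v) - v)⌋.toNat + 1) := by
    apply le_trans (Finset.card_biUnion_le)
    apply Finset.sum_le_sum
    intro v _
    exact le_trans (Finset.card_image_le) (le_of_eq (Finset.card_range _))
  have hVsub : ↑Vf ⊆ Vset β n := by rw [hVf]; exact fun v hv => (Set.Finite.mem_toFinset _).1 hv
  have hsum : ∑ v ∈ Vf, ((⌊β ^ (n+1) * (sSup (Cyl β n v) - v)⌋.toNat : ℝ) + 1)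
      ≤ β ^ (n+1) + Vf.card := by
    have h1 : ∀ v ∈ Vf, ((⌊β ^ (n+1) * (sSup (Cyl β n v) - v)⌋.toNat : ℝ) + 1)
        ≤ β ^ (n+1) * (sSup (Cyl β n v) - v) + 1 := by
      intro v hv
      have hw : 0 ≤ sSup (Cyl β n v) - v := by
        have := Cyl_le_sup (v_mem_Cyl hβ (hVsub hv))
        linarith
      have hy : (0:ℝ) ≤ β ^ (n+1) * (sSup (Cyl β n v) - v) := by positivity
      have hfl : (0:ℤ) ≤ ⌊β ^ (n+1) * (sSup (Cyl β n v) - v)⌋ := Int.floor_nonneg.2 hy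
      have : ((⌊β ^ (n+1) * (sSup (Cyl β n v) - v)⌋.toNat : ℤ) : ℝ)
          ≤ β ^ (n+1) * (sSup (Cyl β n v) - v) := by
        rw [Int.toNat_of_nonneg hfl]
        exact Int.floor_le _
      push_cast at this ⊢
      linarith
    calc ∑ v ∈ Vf, ((⌊β ^ (n+1) * (sSup (Cyl β n v) - v)⌋.toNat : ℝ) + 1)
        ≤ ∑ v ∈ Vf, (β ^ (n+1) * (sSup (Cyl β n v) - v) + 1) := Finset.sum_le_sum h1
      _ = β ^ (n+1) * (∑ v ∈ Vf, (sSup (Cyl β n v) - v)) + Vf.card := by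
          rw [Finset.sum_add_distrib, ← Finset.mul_sum]
          simp
      _ ≤ β ^ (n+1) * 1 + Vf.card := by
          have := sum_Cyl_width hβ n Vf hVsub
          gcongr
      _ = β ^ (n+1) + Vf.card := by ring
  have hVfcard : (Vf.card : ℝ) = (Vset β n).ncard := by
    rw [hVf, Set.ncard_eq_toFinset_card _ (Vset_finite hβ n)]
  calc ((Vset β (n+1)).ncard : ℝ) ≤ (Tf.card : ℝ) := by exact_mod_cast hcard1
    _ ≤ ∑ v ∈ Vf, ((⌊β ^ (n+1) * (sSup (Cyl β n v) - v)⌋.toNat : ℝ) + 1) := by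
        have := hcard2
        calc (Tf.card : ℝ) ≤ ((∑ v ∈ Vf, (⌊β ^ (n+1) * (sSup (Cyl β n v) - v)⌋.toNat + 1) : ℕ) : ℝ) := by
              exact_mod_cast this
          _ = _ := by push_cast; ring
    _ ≤ β ^ (n+1) + Vf.card := hsum
    _ = (Vset β n).ncard + β ^ (n+1) := by rw [hVfcard]; ring

lemma card_total {β : ℝ} (hβ : 1 < β) (n : ℕ) :
    ((Vset β n).ncard : ℝ) ≤ (1 + β / (β - 1)) * β ^ n := by
  have hβ0 : (0:ℝ) < β := lt_trans one_pos hβ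
  have hβ1 : (0:ℝ) < β - 1 := by linarith
  induction n with
  | zero =>
    have : Vset β 0 = {0} := by
      apply Set.eq_singleton_iff_nonempty_unique_mem.2
      constructor
      · exact ⟨0, ⟨0, by norm_num, by simp [bConv]⟩⟩
      · rintro _ ⟨x, _, rfl⟩; simp [bConv]
    rw [this, Set.ncard_singleton]
    have : (0:ℝ) < β / (β - 1) := by positivity
    simp only [pow_zero, mul_one]
    push_cast
    linarith
  | succ n ih =>
    have h1 := card_step hβ n
    have h2 : (1 + β / (β - 1)) * β ^ n + β ^ (n+1) ≤ (1 + β / (β - 1)) * β ^ (n+1) := by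
      have hpn : (0:ℝ) < β ^ n := pow_pos hβ0 n
      have hK : β / (β - 1) * (β - 1) = β := div_mul_cancel₀ _ (ne_of_gt hβ1)
      rw [pow_succ]
      nlinarith [mul_pos (div_pos hβ0 hβ1) hpn]
    linarith

lemma ellRun_zeros {β x : ℝ} {n m : ℕ} (hm1 : 1 ≤ m) (hm : m ≤ ellRun β x n) :
    ∀ j < m, bDigit β x (n + j) = 0 := by
  set S := {k : ℕ | ∀ j < k, bDigit β x (n + j) = 0} with hS
  have hS0 : 0 ∈ S := by intro j hj; omega
  have hbdd : BddAbove S := by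
    by_contra hb
    have : ellRun β x n = 0 := by
      rw [ellRun, ← hS, csSup_of_not_bddAbove hb, csSup_empty]
      rfl
    omega
  have hmem : sSup S ∈ S := Nat.sSup_mem ⟨0, hS0⟩ hbdd
  intro j hj
  exact hmem j (lt_of_lt_of_le hj hm)

lemma bConv_of_zeros {β : ℝ} (x : ℝ) {n m : ℕ}
    (h : ∀ j < m, bDigit β x (n + j) = 0) : bConv β x (n + m) = bConv β x n := by
  induction m with
  | zero => rfl
  | succ m ih =>
    have : n + (m + 1) = (n + m) + 1 := by omega
    rw [this, bConv_succ, ih (fun j hj => h j (by omega)), h m (by omega)]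
    simp

lemma mem_cover_interval {β : ℝ} (hβ : 1 < β) {x : ℝ} (hx : x ∈ Set.Ico (0:ℝ) 1)
    {n m : ℕ} (h : ∀ j < m, bDigit β x (n + j) = 0) :
    x ∈ Set.Icc (bConv β x n) (bConv β x n + (β ^ (n + m))⁻¹) := by
  refine ⟨bConv_le_self hβ hx n, ?_⟩
  have h1 := self_lt_bConv_add hβ hx (n + m)
  rw [bConv_of_zeros x h] at h1
  exact h1.le

set_option maxHeartbeats 1000000 in
lemma key2 {β : ℝ} (hβ : 1 < β) (φ : ℕ → ℝ) {c d : ℝ} (hc : 0 < c)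
    (hev : ∀ᶠ n : ℕ in Filter.atTop, c * n ≤ φ n) (hd : 1 / (1 + c) < d) :
    μH[d] {x ∈ Set.Ico (0:ℝ) 1 | ∃ᶠ n in Filter.atTop, φ n ≤ (ellRun β x n : ℝ)} = 0 := by
  have hβ0 : (0:ℝ) < β := lt_trans one_pos hβ
  have h1c : (0:ℝ) < 1 + c := by linarith
  have hd0 : 0 < d := lt_trans (by positivity) hd
  set r₀ : ℝ := β ^ (-(1+c)) with hr₀def
  have hr₀pos : 0 < r₀ := Real.rpow_pos_of_pos hβ0 _
  have hr₀lt : r₀ < 1 := Real.rpow_lt_one_of_one_lt_of_neg hβ (by linarith)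
  set q : ℝ := β ^ (1 - (1+c)*d) with hqdef
  have hqpos : 0 < q := Real.rpow_pos_of_pos hβ0 _
  have hqlt : q < 1 := by
    apply Real.rpow_lt_one_of_one_lt_of_neg hβ
    rw [div_lt_iff₀ h1c] at hd
    nlinarith
  set K : ℝ := 1 + β / (β - 1) with hKdef
  have hβ1 : (0:ℝ) < β - 1 := by linarith
  have hK0 : 0 < K := by
    have h : 0 < β / (β - 1) := by positivity
    rw [hKdef]; linarith
  set E := {x ∈ Set.Ico (0:ℝ) 1 | ∃ᶠ n in Filter.atTop, φ n ≤ (ellRun β x n : ℝ)} with hE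
  have hgeom : ∀ M : ℕ, β ^ M * ((r₀ ^ M) ^ d) = q ^ M := by
    intro M
    have h1 : r₀ ^ M = β ^ ((-(1+c)) * M) := by
      rw [← Real.rpow_natCast r₀ M, hr₀def, ← Real.rpow_mul hβ0.le]
    have h2 : (r₀ ^ M) ^ d = β ^ ((-(1+c)) * M * d) := by
      rw [h1, ← Real.rpow_mul hβ0.le]
    have h3 : (β:ℝ) ^ (M:ℕ) = β ^ ((M:ℕ):ℝ) := by rw [Real.rpow_natCast]
    have h4 : (q:ℝ) ^ (M:ℕ) = β ^ ((1 - (1+c)*d) * M) := by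
      rw [← Real.rpow_natCast q M, hqdef, ← Real.rpow_mul hβ0.le]
    rw [h2, h3, h4, ← Real.rpow_add hβ0]
    congr 1
    ring
  set Vf : ℕ → Finset ℝ := fun n => (Vset_finite hβ n).toFinset with hVfdef
  set t : ∀ N : ℕ, ((n : ℕ) × {v // v ∈ Vf (N + n)}) → Set ℝ :=
    fun N i => Set.Icc (i.2 : ℝ) ((i.2 : ℝ) + r₀ ^ (N + i.1)) with htdef
  have hdiam : ∀ N i, EMetric.diam (t N i) = ENNReal.ofReal (r₀ ^ (N + i.1)) := by
    intro N i
    rw [htdef]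
    simp only [EMetric.diam, Real.ediam_Icc]
    congr 1
    ring
  have hcover : ∀ N : ℕ, E ⊆ ⋃ i, t N i := by
    intro N x hx
    obtain ⟨hxI, hfreq⟩ := hx
    obtain ⟨N₀, hN₀⟩ := Filter.eventually_atTop.1 hev
    obtain ⟨n, hn1, hnge⟩ :=
      (hfreq.and_eventually (Filter.eventually_ge_atTop (max (max N N₀) 1))).exists
    have hnN : N ≤ n := le_trans (le_trans (le_max_left _ _) (le_max_left _ _)) hnge
    have hnN₀ : N₀ ≤ n := le_trans (le_trans (le_max_right _ _) (le_max_left _ _)) hnge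
    have hn1' : 1 ≤ n := le_trans (le_max_right _ _) hnge
    have hφn : c * n ≤ φ n := hN₀ n hnN₀
    have hn0 : (0:ℝ) < n := by exact_mod_cast hn1'
    have hcn0 : (0:ℝ) < c * n := mul_pos hc hn0
    set m := ⌈c * (n:ℝ)⌉₊ with hm
    have hm1 : 1 ≤ m := Nat.one_le_iff_ne_zero.2 (by
      intro h0
      have := Nat.ceil_eq_zero.1 (hm ▸ h0)
      linarith)
    have hmle : m ≤ ellRun β x n := Nat.ceil_le.2 (le_trans hφn hn1)
    have hzeros := ellRun_zeros hm1 hmle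
    have hxmem := mem_cover_interval hβ hxI hzeros
    obtain ⟨k, rfl⟩ : ∃ k, n = N + k := ⟨n - N, by omega⟩
    have hvV : bConv β x (N + k) ∈ Vf (N + k) :=
      (Set.Finite.mem_toFinset _).2 ⟨x, hxI, rfl⟩
    refine Set.mem_iUnion.2 ⟨⟨k, ⟨bConv β x (N + k), hvV⟩⟩, ?_⟩
    rw [htdef]
    simp only
    refine ⟨hxmem.1, le_trans hxmem.2 ?_⟩
    have hlen : (β ^ ((N + k) + m))⁻¹ ≤ r₀ ^ (N + k) := by
      have e1 : (β ^ ((N + k) + m))⁻¹ = β ^ (-(((N + k) + m : ℕ) : ℝ)) := by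
        rw [Real.rpow_neg hβ0.le, Real.rpow_natCast]
      have e2 : r₀ ^ (N + k) = β ^ ((-(1+c)) * ((N + k : ℕ) : ℝ)) := by
        rw [← Real.rpow_natCast r₀ (N + k), hr₀def, ← Real.rpow_mul hβ0.le]
      rw [e1, e2]
      apply Real.rpow_le_rpow_of_exponent_le hβ.le
      have hcm : c * ((N + k : ℕ) : ℝ) ≤ (m : ℝ) := Nat.le_ceil _
      push_cast at hcm ⊢
      nlinarith
    linarith
  -- the Hausdorff measure estimate
  set Q : ℝ≥0∞ := ENNReal.ofReal q with hQdef
  have hQlt : Q < 1 := by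
    rw [hQdef]
    exact ENNReal.ofReal_lt_one.2 hqlt
  have hQne : (1 : ℝ≥0∞) - Q ≠ 0 := by
    simp only [ne_eq, tsub_eq_zero_iff_le, not_le]
    exact hQlt
  set A : ℝ≥0∞ := ENNReal.ofReal K * (1 - Q)⁻¹ with hAdef
  have hAne : A ≠ ⊤ := by
    rw [hAdef]
    exact ENNReal.mul_ne_top ENNReal.ofReal_ne_top (ENNReal.inv_ne_top.2 hQne)
  have hbound : ∀ N : ℕ, (∑' i, EMetric.diam (t N i) ^ d) ≤ A * Q ^ N := by
    intro N
    have hterm : ∀ (n : ℕ) (v : {v // v ∈ Vf (N + n)}),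
        EMetric.diam (t N ⟨n, v⟩) ^ d = ENNReal.ofReal ((r₀ ^ (N + n)) ^ d) := by
      intro n v
      rw [hdiam N ⟨n, v⟩]
      exact ENNReal.ofReal_rpow_of_pos (pow_pos hr₀pos _)
    calc (∑' i, EMetric.diam (t N i) ^ d)
        = ∑' (n : ℕ), ∑' (v : {v // v ∈ Vf (N + n)}), EMetric.diam (t N ⟨n, v⟩) ^ d :=
          ENNReal.tsum_sigma' _
      _ = ∑' (n : ℕ), ((Vf (N + n)).card : ℝ≥0∞) * ENNReal.ofReal ((r₀ ^ (N + n)) ^ d) := by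
          congr 1
          funext n
          rw [tsum_fintype]
          simp [hterm, Finset.sum_const, Fintype.card_coe, nsmul_eq_mul]
      _ ≤ ∑' (n : ℕ), ENNReal.ofReal K * Q ^ (N + n) := by
          apply ENNReal.tsum_le_tsum
          intro n
          have hcard : ((Vf (N + n)).card : ℝ) ≤ K * β ^ (N + n) := by
            have h1 := card_total hβ (N + n)
            have h2 : (Vf (N + n)).card = (Vset β (N + n)).ncard := by
              rw [hVfdef]
              exact (Set.ncard_eq_toFinset_card _ (Vset_finite hβ (N + n))).symm
            rw [h2]
            exact h1
          have hreal : ((Vf (N + n)).card : ℝ) * ((r₀ ^ (N + n)) ^ d) ≤ K * q ^ (N + n) := by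
            have := hgeom (N + n)
            have hpos : (0:ℝ) < (r₀ ^ (N + n)) ^ d := Real.rpow_pos_of_pos (pow_pos hr₀pos _) _
            nlinarith [pow_pos hβ0 (N + n)]
          calc ((Vf (N + n)).card : ℝ≥0∞) * ENNReal.ofReal ((r₀ ^ (N + n)) ^ d)
              = ENNReal.ofReal (((Vf (N + n)).card : ℝ) * ((r₀ ^ (N + n)) ^ d)) := by
                rw [ENNReal.ofReal_mul (Nat.cast_nonneg _)]
                congr 1
                simp [ENNReal.ofReal_natCast]
            _ ≤ ENNReal.ofReal (K * q ^ (N + n)) := ENNReal.ofReal_le_ofReal hreal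
            _ = ENNReal.ofReal K * Q ^ (N + n) := by
                rw [ENNReal.ofReal_mul hK0.le, hQdef, ENNReal.ofReal_pow hqpos.le]
      _ = A * Q ^ N := by
          have : ∀ n : ℕ, ENNReal.ofReal K * Q ^ (N + n)
              = (ENNReal.ofReal K * Q ^ N) * Q ^ n := by
            intro n; rw [pow_add]; ring
          simp_rw [this]
          rw [ENNReal.tsum_mul_left, ENNReal.tsum_geometric, hAdef]
          ring
  have hμ : μH[d] E ≤ liminf (fun N : ℕ => ∑' i, EMetric.diam (t N i) ^ d) Filter.atTop := by
    apply MeasureTheory.Measure.hausdorffMeasure_le_liminf_tsum d E (fun N => ENNReal.ofReal r₀ ^ N) _ t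
    · apply Filter.Eventually.of_forall
      intro N i
      rw [show Metric.ediam (t N i) = _ from hdiam N i, ← ENNReal.ofReal_pow hr₀pos.le]
      apply ENNReal.ofReal_le_ofReal
      exact pow_le_pow_of_le_one hr₀pos.le hr₀lt.le (Nat.le_add_right N i.1)
    · exact Filter.Eventually.of_forall hcover
    · exact ENNReal.tendsto_pow_atTop_nhds_zero_of_lt_one (ENNReal.ofReal_lt_one.2 hr₀lt)
  have hlim : liminf (fun N : ℕ => ∑' i, EMetric.diam (t N i) ^ d) Filter.atTop = 0 := by
    apply le_antisymm _ zero_le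
    have h1 : liminf (fun N : ℕ => ∑' i, EMetric.diam (t N i) ^ d) Filter.atTop
        ≤ liminf (fun N : ℕ => A * Q ^ N) Filter.atTop := by
      apply liminf_le_liminf (Filter.Eventually.of_forall hbound)
    have h2 : Filter.Tendsto (fun N : ℕ => A * Q ^ N) Filter.atTop (nhds 0) := by
      have := ENNReal.Tendsto.const_mul (a := A)
        (ENNReal.tendsto_pow_atTop_nhds_zero_of_lt_one hQlt) (Or.inr hAne)
      simpa using this
    rw [h2.liminf_eq] at h1
    exact h1
  rw [hlim] at hμ
  exact le_antisymm hμ zero_le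

lemma keyDim {β : ℝ} (hβ : 1 < β) (φ : ℕ → ℝ) {c : ℝ} (hc : 0 < c)
    (hev : ∀ᶠ n : ℕ in Filter.atTop, c * n ≤ φ n) :
    dimH {x ∈ Set.Ico (0:ℝ) 1 | ∃ᶠ n in Filter.atTop, φ n ≤ (ellRun β x n : ℝ)}
      ≤ ENNReal.ofReal (1/(1+c)) := by
  apply dimH_le
  intro d' hd'
  by_contra hlt
  push_neg at hlt
  have hreal : 1/(1+c) < (d' : ℝ) := by
    rw [← ENNReal.ofReal_coe_nnreal] at hlt
    exact (ENNReal.ofReal_lt_ofReal_iff_of_nonneg (by positivity)).1 hlt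
  have h0 := key2 hβ φ hc hev hreal
  rw [hd'] at h0
  exact ENNReal.top_ne_zero h0

theorem stmt10 (β : ℝ) (hβ : 1 < β) (φ : ℕ → ℝ) (hφ : ∀ n, 0 ≤ φ n) :
    dimH {x ∈ Set.Ico (0:ℝ) 1 | ∃ᶠ n in Filter.atTop, φ n ≤ (ellRun β x n : ℝ)} ≤
      1 / (1 + Filter.liminf (fun n : ℕ => ENNReal.ofReal (φ n / n)) Filter.atTop) := by
  set L := Filter.liminf (fun n : ℕ => ENNReal.ofReal (φ n / n)) Filter.atTop with hL
  set E := {x ∈ Set.Ico (0:ℝ) 1 | ∃ᶠ n in Filter.atTop, φ n ≤ (ellRun β x n : ℝ)} with hE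
  have hdim1 : dimH E ≤ 1 := by
    calc dimH E ≤ dimH (Set.univ : Set ℝ) := dimH_mono (Set.subset_univ _)
      _ = 1 := Real.dimH_univ
  by_cases hL0 : L = 0
  · rw [hL0, add_zero]
    simpa using hdim1
  · have hLpos : 0 < L := pos_iff_ne_zero.2 hL0
    apply le_of_forall_gt_imp_ge_of_dense
    intro s hs
    by_cases hstop : s = ⊤
    · rw [hstop]; exact le_top
    -- find c' : ℝ≥0∞ with 0 < c' < L and 1/(1+c') ≤ s
    have hkey : ∃ c' : ℝ≥0∞, 0 < c' ∧ c' < L ∧ 1/(1+c') ≤ s := by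
      rcases le_or_gt (s⁻¹) 1 with h | h
      · obtain ⟨c', hc'0, hc'L⟩ := exists_between hLpos
        have hs1 : (1:ℝ≥0∞) ≤ s := ENNReal.inv_le_one.1 h
        refine ⟨c', hc'0, hc'L, le_trans ?_ hs1⟩
        rw [one_div]
        exact ENNReal.inv_le_one.2 le_self_add
      · have hinvlt : s⁻¹ < 1 + L := by
          have h2 : s⁻¹ < (1/(1+L))⁻¹ := ENNReal.inv_lt_inv.2 hs
          rwa [one_div, inv_inv] at h2
        have hsub : s⁻¹ - 1 < L :=
          (ENNReal.sub_lt_iff_lt_right (by simp) h.le).2 (by rwa [add_comm] at hinvlt)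
        obtain ⟨c', hc'1, hc'L⟩ := exists_between hsub
        refine ⟨c', lt_of_le_of_lt zero_le hc'1, hc'L, ?_⟩
        have hle : s⁻¹ ≤ 1 + c' := by
          have h3 := tsub_le_iff_right.1 hc'1.le
          rwa [add_comm] at h3
        calc 1/(1+c') = (1+c')⁻¹ := one_div _
          _ ≤ (s⁻¹)⁻¹ := ENNReal.inv_le_inv.2 hle
          _ = s := inv_inv s
    obtain ⟨c', hc'0, hc'L, hc's⟩ := hkey
    have hc'top : c' ≠ ⊤ := (lt_of_lt_of_le hc'L le_top).ne
    set c := c'.toReal with hcdef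
    have hc0 : 0 < c := ENNReal.toReal_pos hc'0.ne' hc'top
    have hofReal : ENNReal.ofReal c = c' := ENNReal.ofReal_toReal hc'top
    have hev : ∀ᶠ n : ℕ in Filter.atTop, c * n ≤ φ n := by
      have hfreq : ∀ᶠ n in Filter.atTop, ENNReal.ofReal c < ENNReal.ofReal (φ n / n) := by
        apply Filter.eventually_lt_of_lt_liminf
        · rw [hofReal]; exact hc'L
        · isBoundedDefault
      filter_upwards [hfreq, Filter.eventually_ge_atTop 1] with n h1 h2
      have hn0 : (0:ℝ) < n := by exact_mod_cast h2
      have hlt : c < φ n / n := (ENNReal.ofReal_lt_ofReal_iff_of_nonneg hc0.le).1 h1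
      rw [lt_div_iff₀ hn0] at hlt
      exact hlt.le
    calc dimH E ≤ ENNReal.ofReal (1/(1+c)) := keyDim hβ φ hc0 hev
      _ = 1/(1+c') := by
          rw [ENNReal.ofReal_div_of_pos (by linarith), ENNReal.ofReal_one,
            ENNReal.ofReal_add zero_le_one hc0.le, ENNReal.ofReal_one, hofReal]
      _ ≤ s := hc's
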